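/- Let s : [0,∞) → ℝ be the step function with s(x) = k(k+1)/2 where k = ⌊x⌋ (the partial-sum function of 1 + 2 + 3 + ⋯). Then with q(P) = (3/2)(P − 1/3)P², we have q(P)[s](x) → −1/12 as x → ∞; i.e., the generalized Cesàro sum of ∑ n is −1/12. -/

import Mathlib

open Filter intervalIntegral

/-- The continuous Cesàro operator (real-valued version). -/
noncomputable def cesaroPR (f : ℝ → ℝ) : ℝ → ℝ :=
  fun x => (1 / x) * ∫ t in (0 : ℝ)..x, f t

/-- The partial-sum function of `1 + 2 + 3 + ⋯`, i.e. `s(x) = k(k+1)/2` with `k = ⌊x⌋`. -/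
noncomputable def natPartialSum : ℝ → ℝ :=
  fun x => (⌊x⌋ : ℝ) * ((⌊x⌋ : ℝ) + 1) / 2

open MeasureTheory Set

/- ### Auxiliary definitions -/

noncomputable def bb : ℝ → ℝ := fun t => -1/6 + Int.fract t / 2 - (Int.fract t)^2 / 2

noncomputable def cc : ℝ → ℝ := fun t =>
  if t < 1 then 1/6 - t/2 + t^2/3
  else (Int.fract t / 6 - (Int.fract t)^2/2 + (Int.fract t)^3/3) / t

/- ### Generic integrability machinery -/

/-- Measurable and bounded on compacts. -/
def Nice (f : ℝ → ℝ) : Prop :=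
  Measurable f ∧ ∀ r : ℝ, ∃ M : ℝ, 0 ≤ M ∧ ∀ t : ℝ, |t| ≤ r → |f t| ≤ M

lemma Nice.intervalIntegrable {f : ℝ → ℝ} (hf : Nice f) (a b : ℝ) :
    IntervalIntegrable f volume a b := by
  obtain ⟨M, hM0, hM⟩ := hf.2 (max |a| |b|)
  have hmeas : MeasureTheory.AEStronglyMeasurable f (volume.restrict (Set.uIoc a b)) :=
    hf.1.aestronglyMeasurable.restrict
  rw [intervalIntegrable_iff]
  have hconst : MeasureTheory.IntegrableOn (fun _ : ℝ => M) (Set.uIoc a b) volume :=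
    integrableOn_const measure_Ioc_lt_top.ne
  refine MeasureTheory.Integrable.mono' hconst hmeas ?_
  refine MeasureTheory.ae_restrict_of_forall_mem measurableSet_uIoc ?_
  intro t ht
  have h1 : min a b < t := ht.1
  have h2 : t ≤ max a b := ht.2
  have habs : |t| ≤ max |a| |b| := by
    have h := abs_le_max_abs_abs (le_of_lt h1) h2
    rcases le_total a b with hab | hab
    · rwa [min_eq_left hab, max_eq_right hab] at h
    · rw [min_eq_right hab, max_eq_left hab] at h
      exact h.trans (le_of_eq (max_comm _ _))
  exact hM t habs

lemma nice_nps : Nice natPartialSum := by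
  constructor
  · unfold natPartialSum
    have h1 : Measurable fun x : ℝ => (⌊x⌋ : ℝ) :=
      (continuous_of_discreteTopology (f := fun n : ℤ => (n : ℝ))).measurable.comp
        (measurable_id.floor)
    exact ((h1.mul (h1.add measurable_const)).div measurable_const)
  · intro r
    refine ⟨(|r|+1)*(|r|+2), by positivity, ?_⟩
    intro t ht
    have h1 : (⌊t⌋ : ℝ) ≤ t := Int.floor_le t
    have h2 : t - 1 < ⌊t⌋ := Int.sub_one_lt_floor t
    have h3 : -|r| ≤ t := by linarith [(abs_le.1 (ht.trans (le_abs_self r))).1]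
    have h4 : t ≤ |r| := (abs_le.1 (ht.trans (le_abs_self r))).2
    have h0r : 0 ≤ |r| := abs_nonneg r
    set r' := |r| with hr'
    unfold natPartialSum
    rw [abs_div, abs_mul]
    have hb : |(⌊t⌋:ℝ)| ≤ r' + 1 := by
      rw [abs_le]; constructor <;> nlinarith
    have hb2 : |(⌊t⌋:ℝ) + 1| ≤ r' + 2 := by
      rw [abs_le]; rw [abs_le] at hb; constructor <;> nlinarith
    have : |(⌊t⌋:ℝ)| * |(⌊t⌋:ℝ)+1| ≤ (r'+1)*(r'+2) := by
      apply mul_le_mul hb hb2 (abs_nonneg _) (by positivity)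
    simp only [abs_two]
    nlinarith

lemma Nice.cesaro {f : ℝ → ℝ} (hf : Nice f) : Nice (cesaroPR f) := by
  constructor
  · have hc : Continuous fun x => ∫ t in (0:ℝ)..x, f t :=
      intervalIntegral.continuous_primitive (fun a b => hf.intervalIntegrable a b) 0
    exact (measurable_const.div measurable_id).mul hc.measurable
  · intro r
    obtain ⟨M, hM0, hM⟩ := hf.2 r
    refine ⟨M, hM0, ?_⟩
    intro t ht
    rcases eq_or_ne t 0 with rfl | ht0
    · simp [cesaroPR, hM0]
    · unfold cesaroPR
      rw [abs_mul]
      have hint : |∫ u in (0:ℝ)..t, f u| ≤ M * |t - 0| := by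
        rw [← Real.norm_eq_abs]
        apply intervalIntegral.norm_integral_le_of_norm_le_const
        intro u hu
        rw [Real.norm_eq_abs]
        apply hM
        rcases le_or_gt 0 t with h | h
        · rw [Set.uIoc_of_le h] at hu
          rw [abs_le]
          exact ⟨by linarith [hu.1, abs_nonneg t, neg_abs_le t, (abs_le.1 ht).1],
                 le_trans hu.2 (le_trans (le_abs_self t) ht)⟩
        · rw [Set.uIoc_of_ge h.le] at hu
          rw [abs_le]
          have hr0 : 0 ≤ r := le_trans (abs_nonneg t) ht
          constructor
          · linarith [hu.1, (abs_le.1 ht).1]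
          · linarith [hu.2]
      calc |1/t| * |∫ u in (0:ℝ)..t, f u| ≤ |1/t| * (M * |t - 0|) := by
            apply mul_le_mul_of_nonneg_left hint (abs_nonneg _)
        _ = M := by
            rw [sub_zero, abs_div, abs_one]
            field_simp

lemma nice_bb : Nice bb := by
  constructor
  · unfold bb
    exact ((measurable_const.add ((Measurable.fract measurable_id).div_const 2)).sub
      (((Measurable.fract measurable_id).pow_const 2).div_const 2))
  · intro r
    refine ⟨1/6, by norm_num, fun t _ => ?_⟩
    have h0 : 0 ≤ Int.fract t := Int.fract_nonneg t
    have h1 : Int.fract t < 1 := Int.fract_lt_one t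
    unfold bb
    rw [abs_le]
    constructor <;> nlinarith

lemma nice_cc : Nice cc := by
  constructor
  · unfold cc
    apply Measurable.ite (measurableSet_lt measurable_id measurable_const)
    · exact (measurable_const.sub (measurable_id.div_const 2)).add
        ((measurable_id.pow_const 2).div_const 3)
    · have hfr := Measurable.fract (measurable_id : Measurable fun t : ℝ => t)
      exact (((hfr.div_const 6).sub ((hfr.pow_const 2).div_const 2)).add
        ((hfr.pow_const 3).div_const 3)).div measurable_id
  · intro r
    refine ⟨max (1/6) (1 + |r|^2), le_trans (by norm_num) (le_max_left _ _), fun t ht => ?_⟩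
    rcases lt_or_ge t 1 with h | h
    · refine le_trans ?_ (le_max_right _ _)
      simp only [cc, if_pos h]
      have h4 : t ≤ |r| := (abs_le.1 (ht.trans (le_abs_self r))).2
      have h3 : -|r| ≤ t := by linarith [(abs_le.1 (ht.trans (le_abs_self r))).1]
      rw [abs_le]
      constructor <;> nlinarith [sq_nonneg t, sq_nonneg (t-1), abs_nonneg r, sq_nonneg (t+1)]
    · refine le_trans ?_ (le_max_left _ _)
      simp only [cc, if_neg (not_lt.2 h)]
      have h0 : 0 ≤ Int.fract t := Int.fract_nonneg t
      have h1 : Int.fract t < 1 := Int.fract_lt_one t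
      have ht1 : (1:ℝ) ≤ t := h
      rw [abs_div]
      rw [abs_of_nonneg (by linarith : (0:ℝ) ≤ t)]
      have hnum : |Int.fract t / 6 - Int.fract t ^ 2 / 2 + Int.fract t ^ 3 / 3| ≤ 1/6 := by
        rw [abs_le]
        constructor <;> nlinarith [sq_nonneg (Int.fract t), sq_nonneg (Int.fract t - 1),
          sq_nonneg (Int.fract t - 1/2), mul_nonneg h0 h0, mul_nonneg (mul_nonneg h0 h0) h0]
      calc |Int.fract t / 6 - Int.fract t ^ 2 / 2 + Int.fract t ^ 3 / 3| / t ≤ (1/6) / t :=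
            (div_le_div_iff_of_pos_right (by linarith : (0:ℝ) < t)).2 hnum
        _ ≤ 1/6 := div_le_self (by norm_num) ht1

/- ### Integral computations for `natPartialSum` -/

lemma integral_congr_Ico {f g : ℝ → ℝ} {a b : ℝ} (hab : a ≤ b)
    (h : ∀ t ∈ Set.Ico a b, f t = g t) :
    ∫ t in a..b, f t = ∫ t in a..b, g t := by
  apply intervalIntegral.integral_congr_ae
  have hb : ∀ᵐ t : ℝ, t ≠ b := by
    rw [MeasureTheory.ae_iff]; simpa using Real.volume_singleton
  filter_upwards [hb] with t ht htmem
  rw [Set.uIoc_of_le hab] at htmem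
  exact h t ⟨le_of_lt htmem.1, lt_of_le_of_ne htmem.2 ht⟩

lemma nps_on_Ico (n : ℤ) {t : ℝ} (ht : t ∈ Set.Ico (n:ℝ) (n+1)) :
    natPartialSum t = (n:ℝ) * (n+1) / 2 := by
  have : ⌊t⌋ = n := Int.floor_eq_iff.2 ⟨ht.1, by exact_mod_cast ht.2⟩
  simp [natPartialSum, this]

lemma integral_nps_step (n : ℤ) :
    ∫ t in (n:ℝ)..((n:ℝ)+1), natPartialSum t = (n:ℝ) * (n+1) / 2 := by
  rw [integral_congr_Ico (by linarith) (fun t ht => nps_on_Ico n ht)]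
  simp

lemma integral_nps_nat (n : ℕ) :
    ∫ t in (0:ℝ)..(n:ℝ), natPartialSum t = (n:ℝ)^3/6 - (n:ℝ)/6 := by
  induction n with
  | zero => simp
  | succ n ih =>
    have hsplit : ∫ t in (0:ℝ)..((n:ℝ)+1), natPartialSum t
        = (∫ t in (0:ℝ)..(n:ℝ), natPartialSum t) + ∫ t in (n:ℝ)..((n:ℝ)+1), natPartialSum t :=
      (intervalIntegral.integral_add_adjacent_intervals (nice_nps.intervalIntegrable _ _)
        (nice_nps.intervalIntegrable _ _)).symm
    push_cast
    rw [hsplit, ih]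
    have := integral_nps_step (n : ℤ)
    push_cast at this
    rw [this]; ring

lemma integral_nps {x : ℝ} (hx : 0 ≤ x) :
    ∫ t in (0:ℝ)..x, natPartialSum t
      = x^3/6 + x * bb x + (Int.fract x/6 - (Int.fract x)^2/2 + (Int.fract x)^3/3) := by
  have hn0 : (0:ℤ) ≤ ⌊x⌋ := Int.floor_nonneg.2 hx
  set n : ℤ := ⌊x⌋ with hn
  have hnx : (n:ℝ) ≤ x := Int.floor_le x
  have hxn1 : x < (n:ℝ) + 1 := Int.lt_floor_add_one x
  have hsplit : ∫ t in (0:ℝ)..x, natPartialSum t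
      = (∫ t in (0:ℝ)..(n:ℝ), natPartialSum t) + ∫ t in (n:ℝ)..x, natPartialSum t :=
    (intervalIntegral.integral_add_adjacent_intervals (nice_nps.intervalIntegrable _ _)
      (nice_nps.intervalIntegrable _ _)).symm
  have h1 : ∫ t in (0:ℝ)..(n:ℝ), natPartialSum t = (n:ℝ)^3/6 - (n:ℝ)/6 := by
    obtain ⟨m, hm⟩ := Int.eq_ofNat_of_zero_le hn0
    rw [hm]
    push_cast
    exact integral_nps_nat m
  have h2 : ∫ t in (n:ℝ)..x, natPartialSum t = (x - n) * ((n:ℝ)*(n+1)/2) := by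
    rw [integral_congr_Ico hnx
      (fun t ht => nps_on_Ico n ⟨ht.1, lt_of_lt_of_le ht.2 (le_of_lt hxn1)⟩)]
    rw [intervalIntegral.integral_const]; simp only [smul_eq_mul]
  rw [hsplit, h1, h2]
  have ha : Int.fract x = x - (n:ℝ) := rfl
  rw [ha]
  unfold bb
  rw [ha]
  ring

/- ### The first Cesàro average -/

lemma u1_eq {x : ℝ} (hx : 0 ≤ x) :
    cesaroPR natPartialSum x = x^2/6 + bb x + cc x := by
  rcases eq_or_lt_of_le hx with rfl | hx0
  · have : cc 0 = 1/6 := by simp [cc]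
    simp [cesaroPR, bb, this, Int.fract_zero]
    norm_num
  · have hC : Int.fract x/6 - (Int.fract x)^2/2 + (Int.fract x)^3/3 = x * cc x := by
      rcases lt_or_ge x 1 with h | h
      · have hfr : Int.fract x = x := Int.fract_eq_self.2 ⟨hx, h⟩
        simp only [cc, if_pos h, hfr]
        ring
      · simp only [cc, if_neg (not_lt.2 h)]
        field_simp
    unfold cesaroPR
    rw [integral_nps hx, hC]
    field_simp

/- ### Estimates for `bb` -/

lemma bb_abs (t : ℝ) : |bb t| ≤ 1/6 := by
  have h0 : 0 ≤ Int.fract t := Int.fract_nonneg t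
  have h1 : Int.fract t < 1 := Int.fract_lt_one t
  unfold bb
  rw [abs_le]
  constructor <;> nlinarith

lemma bb_on_Ico (n : ℤ) {t : ℝ} (ht : t ∈ Set.Ico (n:ℝ) (n+1)) :
    bb t = -1/6 + (t - n)/2 - (t - n)^2/2 := by
  have hfl : ⌊t⌋ = n := Int.floor_eq_iff.2 ⟨ht.1, by exact_mod_cast ht.2⟩
  have : Int.fract t = t - n := by rw [Int.fract, hfl]
  rw [bb, this]

lemma integral_unit_poly : ∫ u in (0:ℝ)..1, (-1/6 + u/2 - u^2/2) = -1/12 := by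
  have h1 : IntervalIntegrable (fun u : ℝ => -1/6 + u/2) MeasureTheory.volume 0 1 :=
    (Continuous.intervalIntegrable (by continuity) 0 1)
  have h2 : IntervalIntegrable (fun u : ℝ => u^2/2) MeasureTheory.volume 0 1 :=
    (Continuous.intervalIntegrable (by continuity) 0 1)
  have h3 : IntervalIntegrable (fun u : ℝ => (-1:ℝ)/6) MeasureTheory.volume 0 1 :=
    (Continuous.intervalIntegrable (by continuity) 0 1)
  have h4 : IntervalIntegrable (fun u : ℝ => u/2) MeasureTheory.volume 0 1 :=
    (Continuous.intervalIntegrable (by continuity) 0 1)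
  rw [show (fun u : ℝ => -1/6 + u/2 - u^2/2) = (fun u : ℝ => (-1/6 + u/2) - u^2/2) from rfl]
  rw [intervalIntegral.integral_sub h1 h2, intervalIntegral.integral_add h3 h4]
  simp [intervalIntegral.integral_div, integral_pow, integral_id]
  norm_num

lemma integral_bb_step (n : ℤ) :
    ∫ t in (n:ℝ)..((n:ℝ)+1), bb t = -1/12 := by
  rw [integral_congr_Ico (by linarith) (fun t ht => bb_on_Ico n ht)]
  have hcomp := intervalIntegral.integral_comp_sub_right
    (a := (n:ℝ)) (b := (n:ℝ)+1) (fun u : ℝ => -1/6 + u/2 - u^2/2) (n:ℝ)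
  rw [hcomp, sub_self, show ((n:ℝ)+1) - n = 1 by ring]
  exact integral_unit_poly

lemma integral_bb_nat (m : ℕ) :
    ∫ t in (0:ℝ)..(m:ℝ), bb t = -(m:ℝ)/12 := by
  induction m with
  | zero => simp
  | succ m ih =>
    have hsplit : ∫ t in (0:ℝ)..((m:ℝ)+1), bb t
        = (∫ t in (0:ℝ)..(m:ℝ), bb t) + ∫ t in (m:ℝ)..((m:ℝ)+1), bb t :=
      (intervalIntegral.integral_add_adjacent_intervals (nice_bb.intervalIntegrable _ _)
        (nice_bb.intervalIntegrable _ _)).symm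
    push_cast
    rw [hsplit, ih]
    have := integral_bb_step (m : ℤ)
    push_cast at this
    rw [this]; ring

lemma lam_small {x : ℝ} (hx : 0 ≤ x) : |∫ t in (0:ℝ)..x, bb t| ≤ x/6 := by
  have h := intervalIntegral.norm_integral_le_of_norm_le_const
    (a := (0:ℝ)) (b := x) (C := 1/6) (f := bb) (fun u _ => by
      rw [Real.norm_eq_abs]; exact bb_abs u)
  rw [Real.norm_eq_abs] at h
  calc |∫ t in (0:ℝ)..x, bb t| ≤ 1/6 * |x - 0| := h
    _ = x/6 := by rw [sub_zero, abs_of_nonneg hx]; ring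

lemma lam_bound {x : ℝ} (hx : 0 ≤ x) : |(∫ t in (0:ℝ)..x, bb t) + x/12| ≤ 1/4 := by
  have hn0 : (0:ℤ) ≤ ⌊x⌋ := Int.floor_nonneg.2 hx
  set n : ℤ := ⌊x⌋ with hn
  have hnx : (n:ℝ) ≤ x := Int.floor_le x
  have hxn1 : x < (n:ℝ) + 1 := Int.lt_floor_add_one x
  have hsplit : ∫ t in (0:ℝ)..x, bb t
      = (∫ t in (0:ℝ)..(n:ℝ), bb t) + ∫ t in (n:ℝ)..x, bb t :=
    (intervalIntegral.integral_add_adjacent_intervals (nice_bb.intervalIntegrable _ _)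
      (nice_bb.intervalIntegrable _ _)).symm
  have h1 : ∫ t in (0:ℝ)..(n:ℝ), bb t = -(n:ℝ)/12 := by
    obtain ⟨m, hm⟩ := Int.eq_ofNat_of_zero_le hn0
    rw [hm]
    push_cast
    exact integral_bb_nat m
  have h2 : |∫ t in (n:ℝ)..x, bb t| ≤ 1/6 := by
    have h := intervalIntegral.norm_integral_le_of_norm_le_const
      (a := (n:ℝ)) (b := x) (C := 1/6) (f := bb) (fun u _ => by
        rw [Real.norm_eq_abs]; exact bb_abs u)
    rw [Real.norm_eq_abs] at h
    calc |∫ t in (n:ℝ)..x, bb t| ≤ 1/6 * |x - n| := h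
      _ ≤ 1/6 := by rw [abs_of_nonneg (by linarith)]; nlinarith
  rw [hsplit, h1]
  have := abs_add_le (∫ t in (n:ℝ)..x, bb t) (-(n:ℝ)/12 + x/12)
  have h3 : |(-(n:ℝ)/12 + x/12)| ≤ 1/12 := by
    rw [abs_le]; constructor <;> nlinarith
  calc |(-(n:ℝ)/12 + ∫ t in (n:ℝ)..x, bb t) + x/12|
      = |(∫ t in (n:ℝ)..x, bb t) + (-(n:ℝ)/12 + x/12)| := by ring_nf
    _ ≤ |∫ t in (n:ℝ)..x, bb t| + |(-(n:ℝ)/12 + x/12)| := abs_add_le _ _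
    _ ≤ 1/6 + 1/12 := add_le_add h2 h3
    _ ≤ 1/4 := by norm_num

/- ### Estimates for `cc` -/

lemma cc_abs {t : ℝ} (ht : 0 ≤ t) : |cc t| ≤ 1/6 := by
  rcases lt_or_ge t 1 with h | h
  · simp only [cc, if_pos h]
    rw [abs_le]
    constructor <;> nlinarith [sq_nonneg t, sq_nonneg (t-1), sq_nonneg (t - 3/4)]
  · simp only [cc, if_neg (not_lt.2 h)]
    have h0 : 0 ≤ Int.fract t := Int.fract_nonneg t
    have h1 : Int.fract t < 1 := Int.fract_lt_one t
    have ht1 : (1:ℝ) ≤ t := h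
    rw [abs_div, abs_of_nonneg (by linarith : (0:ℝ) ≤ t)]
    have hnum : |Int.fract t / 6 - Int.fract t ^ 2 / 2 + Int.fract t ^ 3 / 3| ≤ 1/6 := by
      rw [abs_le]
      constructor <;> nlinarith [sq_nonneg (Int.fract t), sq_nonneg (Int.fract t - 1),
        sq_nonneg (Int.fract t - 1/2), mul_nonneg h0 h0, mul_nonneg (mul_nonneg h0 h0) h0,
        mul_nonneg (mul_nonneg h0 h0) (le_of_lt (sub_pos.2 h1))]
    calc |Int.fract t / 6 - Int.fract t ^ 2 / 2 + Int.fract t ^ 3 / 3| / t ≤ (1/6) / t :=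
          (div_le_div_iff_of_pos_right (by linarith : (0:ℝ) < t)).2 hnum
      _ ≤ 1/6 := div_le_self (by norm_num) ht1

lemma cc_inv {t : ℝ} (ht : 1 ≤ t) : |cc t| ≤ 1/t := by
  have ht0 : (0:ℝ) < t := by linarith
  have h0 : 0 ≤ Int.fract t := Int.fract_nonneg t
  have h1 : Int.fract t < 1 := Int.fract_lt_one t
  simp only [cc, if_neg (not_lt.2 ht)]
  rw [abs_div, abs_of_nonneg ht0.le]
  have hnum : |Int.fract t / 6 - Int.fract t ^ 2 / 2 + Int.fract t ^ 3 / 3| ≤ 1 := by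
    rw [abs_le]
    constructor <;> nlinarith [sq_nonneg (Int.fract t), sq_nonneg (Int.fract t - 1),
      mul_nonneg h0 h0, mul_nonneg (mul_nonneg h0 h0) h0,
      mul_nonneg (mul_nonneg h0 h0) (le_of_lt (sub_pos.2 h1))]
  gcongr

lemma psi_small {x : ℝ} (hx : 0 ≤ x) : |∫ t in (0:ℝ)..x, cc t| ≤ x/6 := by
  have h := intervalIntegral.norm_integral_le_of_norm_le_const
    (a := (0:ℝ)) (b := x) (C := 1/6) (f := cc) (fun u hu => by
      rw [Real.norm_eq_abs]
      rw [Set.uIoc_of_le hx] at hu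
      exact cc_abs (le_of_lt hu.1))
  rw [Real.norm_eq_abs] at h
  calc |∫ t in (0:ℝ)..x, cc t| ≤ 1/6 * |x - 0| := h
    _ = x/6 := by rw [sub_zero, abs_of_nonneg hx]; ring

lemma psi_log {x : ℝ} (hx : 1 ≤ x) :
    |∫ t in (0:ℝ)..x, cc t| ≤ 1/6 + Real.log x := by
  have hx0 : (0:ℝ) ≤ x := by linarith
  have hsplit : ∫ t in (0:ℝ)..x, cc t
      = (∫ t in (0:ℝ)..(1:ℝ), cc t) + ∫ t in (1:ℝ)..x, cc t :=
    (intervalIntegral.integral_add_adjacent_intervals (nice_cc.intervalIntegrable _ _)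
      (nice_cc.intervalIntegrable _ _)).symm
  have h1 : |∫ t in (0:ℝ)..(1:ℝ), cc t| ≤ 1/6 := by
    have h := psi_small (by norm_num : (0:ℝ) ≤ 1)
    simpa using h
  have h2 : |∫ t in (1:ℝ)..x, cc t| ≤ Real.log x := by
    have hnorm := intervalIntegral.norm_integral_le_integral_norm (f := cc)
      (a := (1:ℝ)) (b := x) (μ := volume) hx
    have hmono : (∫ t in (1:ℝ)..x, ‖cc t‖) ≤ ∫ t in (1:ℝ)..x, 1/t := by
      apply intervalIntegral.integral_mono_on hx
        ((nice_cc.intervalIntegrable 1 x).norm)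
        (ContinuousOn.intervalIntegrable ?_)
      · intro t htm
        rw [Real.norm_eq_abs]
        exact cc_inv htm.1
      · apply ContinuousOn.div continuousOn_const continuousOn_id
        intro t htm
        rw [Set.uIcc_of_le hx] at htm
        exact ne_of_gt (lt_of_lt_of_le one_pos htm.1)
    have hlog : (∫ t in (1:ℝ)..x, 1/t) = Real.log x := by
      rw [integral_one_div (by
        rw [Set.uIcc_of_le hx]
        intro hmem
        exact absurd hmem.1 (by norm_num))]
      simp
    rw [Real.norm_eq_abs] at hnorm
    calc |∫ t in (1:ℝ)..x, cc t| ≤ ∫ t in (1:ℝ)..x, ‖cc t‖ := hnorm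
      _ ≤ ∫ t in (1:ℝ)..x, 1/t := hmono
      _ = Real.log x := hlog
  rw [hsplit]
  calc |(∫ t in (0:ℝ)..(1:ℝ), cc t) + ∫ t in (1:ℝ)..x, cc t|
      ≤ |∫ t in (0:ℝ)..(1:ℝ), cc t| + |∫ t in (1:ℝ)..x, cc t| := abs_add_le _ _
    _ ≤ 1/6 + Real.log x := add_le_add h1 h2


/- ### The second Cesàro average -/

lemma u2_eq {x : ℝ} (hx : 0 < x) :
    cesaroPR (cesaroPR natPartialSum) x
      = x^2/18 + (1/x) * ((∫ t in (0:ℝ)..x, bb t) + ∫ t in (0:ℝ)..x, cc t) := by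
  have hcong : ∫ t in (0:ℝ)..x, cesaroPR natPartialSum t
      = ∫ t in (0:ℝ)..x, (t^2/6 + bb t + cc t) := by
    apply intervalIntegral.integral_congr
    intro t ht
    rw [Set.uIcc_of_le hx.le] at ht
    exact u1_eq ht.1
  have hii1 : IntervalIntegrable (fun t : ℝ => t^2/6) volume 0 x :=
    Continuous.intervalIntegrable (by continuity) 0 x
  have hsum1 : ∫ t in (0:ℝ)..x, (t^2/6 + bb t + cc t)
      = (∫ t in (0:ℝ)..x, (t^2/6 + bb t)) + ∫ t in (0:ℝ)..x, cc t :=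
    intervalIntegral.integral_add (hii1.add (nice_bb.intervalIntegrable 0 x))
      (nice_cc.intervalIntegrable 0 x)
  have hsum2 : ∫ t in (0:ℝ)..x, (t^2/6 + bb t)
      = (∫ t in (0:ℝ)..x, t^2/6) + ∫ t in (0:ℝ)..x, bb t :=
    intervalIntegral.integral_add hii1 (nice_bb.intervalIntegrable 0 x)
  have hpow : ∫ t in (0:ℝ)..x, t^2/6 = x^3/18 := by
    rw [intervalIntegral.integral_div, integral_pow]
    norm_num
    ring
  show (1/x) * ∫ t in (0:ℝ)..x, cesaroPR natPartialSum t = _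
  rw [hcong, hsum1, hsum2, hpow]
  field_simp
  ring

noncomputable def ee2 : ℝ → ℝ := fun x => cesaroPR (cesaroPR natPartialSum) x - x^2/18

lemma ee2_eq {x : ℝ} (hx : 0 < x) :
    ee2 x = (1/x) * ((∫ t in (0:ℝ)..x, bb t) + ∫ t in (0:ℝ)..x, cc t) := by
  unfold ee2
  rw [u2_eq hx]
  ring

lemma nice_ee2 : Nice ee2 := by
  have hu2 : Nice (cesaroPR (cesaroPR natPartialSum)) := nice_nps.cesaro.cesaro
  constructor
  · exact hu2.1.sub ((measurable_id.pow_const 2).div_const 18)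
  · intro r
    obtain ⟨M, hM0, hM⟩ := hu2.2 r
    refine ⟨M + |r|^2, by positivity, fun t ht => ?_⟩
    have h1 := hM t ht
    have h2 : t^2 ≤ |r|^2 := by
      have := abs_nonneg t
      nlinarith [sq_abs t, ht.trans (le_abs_self r)]
    unfold ee2
    calc |cesaroPR (cesaroPR natPartialSum) t - t^2/18|
        ≤ |cesaroPR (cesaroPR natPartialSum) t| + |t^2/18| := abs_sub _ _
      _ ≤ M + |r|^2 := by
          apply add_le_add h1
          rw [abs_div, abs_of_nonneg (sq_nonneg t), show |(18:ℝ)| = 18 by norm_num]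
          nlinarith

lemma ee2_bound : ∀ t : ℝ, 0 ≤ t → |ee2 t| ≤ 1/3 := by
  intro t ht
  rcases eq_or_lt_of_le ht with rfl | ht0
  · simp [ee2, cesaroPR]
  · rw [ee2_eq ht0, abs_mul, abs_of_nonneg (by positivity : (0:ℝ) ≤ 1/t)]
    have h := (abs_add_le (∫ u in (0:ℝ)..t, bb u) (∫ u in (0:ℝ)..t, cc u)).trans
      (add_le_add (lam_small ht) (psi_small ht))
    calc (1/t) * |(∫ u in (0:ℝ)..t, bb u) + ∫ u in (0:ℝ)..t, cc u|
        ≤ (1/t) * (t/6 + t/6) := mul_le_mul_of_nonneg_left h (by positivity)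
      _ = 1/3 := by field_simp; ring

lemma ee2_tendsto : Tendsto ee2 atTop (nhds (-(1/12))) := by
  rw [← tendsto_sub_nhds_zero_iff]
  apply squeeze_zero_norm' (a := fun x => (5/12 + Real.log x)/x)
  · filter_upwards [eventually_ge_atTop (1:ℝ)] with x hx
    have hx0 : (0:ℝ) < x := lt_of_lt_of_le one_pos hx
    rw [Real.norm_eq_abs, ee2_eq hx0]
    have key : (1/x) * ((∫ t in (0:ℝ)..x, bb t) + ∫ t in (0:ℝ)..x, cc t) - (-(1/12))
        = (1/x) * ((((∫ t in (0:ℝ)..x, bb t) + x/12)) + ∫ t in (0:ℝ)..x, cc t) := by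
      field_simp
      ring
    rw [key, abs_mul, abs_of_nonneg (by positivity : (0:ℝ) ≤ 1/x)]
    have h := (abs_add_le ((∫ t in (0:ℝ)..x, bb t) + x/12) (∫ t in (0:ℝ)..x, cc t)).trans
      (add_le_add (lam_bound hx0.le) (psi_log hx))
    calc (1/x) * |((∫ t in (0:ℝ)..x, bb t) + x/12) + ∫ t in (0:ℝ)..x, cc t|
        ≤ (1/x) * (1/4 + (1/6 + Real.log x)) := mul_le_mul_of_nonneg_left h (by positivity)
      _ = (5/12 + Real.log x)/x := by
          rw [show (1:ℝ)/4 + (1/6 + Real.log x) = 5/12 + Real.log x by ring_nf]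
          rw [one_div, inv_mul_eq_div]
  · have h1 : Tendsto (fun x : ℝ => (5/12)/x) atTop (nhds 0) :=
      Filter.Tendsto.div_atTop tendsto_const_nhds tendsto_id
    have h2 : Tendsto (fun x : ℝ => Real.log x / x) atTop (nhds 0) :=
      Real.isLittleO_log_id_atTop.tendsto_div_nhds_zero
    have heq : (fun x : ℝ => (5/12 + Real.log x)/x)
        = fun x : ℝ => (5/12)/x + Real.log x / x := funext fun x => add_div _ _ _
    rw [heq]
    simpa using h1.add h2

/- ### The Cesàro operator preserves limits -/

lemma cesaro_tendsto {f : ℝ → ℝ} (hf : Nice f) {M l : ℝ}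
    (hbd : ∀ t, 0 ≤ t → |f t| ≤ M) (hl : Tendsto f atTop (nhds l)) :
    Tendsto (cesaroPR f) atTop (nhds l) := by
  have hM0 : 0 ≤ M := le_trans (abs_nonneg _) (hbd 0 le_rfl)
  rw [Metric.tendsto_atTop] at hl ⊢
  intro ε hε
  obtain ⟨N, hN⟩ := hl (ε/2) (by positivity)
  set N' := max N 1 with hN'def
  have hN'1 : (1:ℝ) ≤ N' := le_max_right _ _
  have hN'0 : (0:ℝ) < N' := lt_of_lt_of_le one_pos hN'1
  refine ⟨max N' (N' * (M + |l|) / (ε/2) + N'), fun x hx => ?_⟩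
  have hxN' : N' ≤ x := le_trans (le_max_left _ _) hx
  have hx0 : (0:ℝ) < x := lt_of_lt_of_le hN'0 hxN'
  have hK : N' * (M + |l|) / (ε/2) + N' ≤ x := le_trans (le_max_right _ _) hx
  have hKey : N' * (M + |l|) ≤ (ε/2) * (x - N') := by
    have h' : N' * (M + |l|) ≤ (x - N') * (ε/2) :=
      (div_le_iff₀ (by positivity : (0:ℝ) < ε/2)).1 (by linarith)
    calc N' * (M + |l|) ≤ (x - N') * (ε/2) := h'
      _ = (ε/2) * (x - N') := mul_comm _ _
  have hdiff : cesaroPR f x - l = (1/x) * ((∫ t in (0:ℝ)..x, f t) - x * l) := by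
    unfold cesaroPR
    field_simp
  have hsub : (∫ t in (0:ℝ)..x, f t) - x * l = ∫ t in (0:ℝ)..x, (f t - l) := by
    rw [intervalIntegral.integral_sub (hf.intervalIntegrable 0 x) intervalIntegrable_const]
    simp [mul_comm]
  have hsplit : ∫ t in (0:ℝ)..x, (f t - l)
      = (∫ t in (0:ℝ)..N', (f t - l)) + ∫ t in N'..x, (f t - l) :=
    (intervalIntegral.integral_add_adjacent_intervals
      ((hf.intervalIntegrable 0 N').sub intervalIntegrable_const)
      ((hf.intervalIntegrable N' x).sub intervalIntegrable_const)).symm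
  have hb1 : |∫ t in (0:ℝ)..N', (f t - l)| ≤ (M + |l|) * N' := by
    have h := intervalIntegral.norm_integral_le_of_norm_le_const
      (a := (0:ℝ)) (b := N') (C := M + |l|) (f := fun t => f t - l) (fun u hu => by
        rw [Set.uIoc_of_le hN'0.le] at hu
        rw [Real.norm_eq_abs]
        calc |f u - l| ≤ |f u| + |l| := abs_sub _ _
          _ ≤ M + |l| := add_le_add (hbd u hu.1.le) le_rfl)
    rw [Real.norm_eq_abs, sub_zero, abs_of_nonneg hN'0.le] at h
    exact h
  have hb2 : |∫ t in N'..x, (f t - l)| ≤ (ε/2) * (x - N') := by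
    have h := intervalIntegral.norm_integral_le_of_norm_le_const
      (a := N') (b := x) (C := ε/2) (f := fun t => f t - l) (fun u hu => by
        rw [Set.uIoc_of_le hxN'] at hu
        rw [Real.norm_eq_abs]
        have : dist (f u) l < ε/2 := hN u (le_trans (le_max_left N 1) hu.1.le)
        rw [Real.dist_eq] at this
        exact this.le)
    rw [Real.norm_eq_abs, show |x - N'| = x - N' from abs_of_nonneg (by linarith)] at h
    exact h
  rw [Real.dist_eq, hdiff, hsub, hsplit, abs_mul,
    abs_of_nonneg (by positivity : (0:ℝ) ≤ 1/x)]
  have htot : |(∫ t in (0:ℝ)..N', (f t - l)) + ∫ t in N'..x, (f t - l)|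
      ≤ (ε/2) * (x - N') + (ε/2) * (x - N') := by
    calc |(∫ t in (0:ℝ)..N', (f t - l)) + ∫ t in N'..x, (f t - l)|
        ≤ |∫ t in (0:ℝ)..N', (f t - l)| + |∫ t in N'..x, (f t - l)| := abs_add_le _ _
      _ ≤ (M + |l|) * N' + (ε/2) * (x - N') := add_le_add hb1 hb2
      _ ≤ (ε/2) * (x - N') + (ε/2) * (x - N') := by nlinarith [hKey]
  calc (1/x) * |(∫ t in (0:ℝ)..N', (f t - l)) + ∫ t in N'..x, (f t - l)|
      ≤ (1/x) * ((ε/2) * (x - N') + (ε/2) * (x - N')) :=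
        mul_le_mul_of_nonneg_left htot (by positivity)
    _ < ε := by
        rw [one_div, inv_mul_lt_iff₀ hx0]
        nlinarith

/- ### The third Cesàro average and the final result -/

lemma u3_eq {x : ℝ} (hx : 0 < x) :
    cesaroPR (cesaroPR (cesaroPR natPartialSum)) x = x^2/54 + cesaroPR ee2 x := by
  have hcong : ∫ t in (0:ℝ)..x, cesaroPR (cesaroPR natPartialSum) t
      = ∫ t in (0:ℝ)..x, (t^2/18 + ee2 t) := by
    apply intervalIntegral.integral_congr
    intro t _
    unfold ee2
    ring
  have hii1 : IntervalIntegrable (fun t : ℝ => t^2/18) volume 0 x :=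
    Continuous.intervalIntegrable (by continuity) 0 x
  have hsum : ∫ t in (0:ℝ)..x, (t^2/18 + ee2 t)
      = (∫ t in (0:ℝ)..x, t^2/18) + ∫ t in (0:ℝ)..x, ee2 t :=
    intervalIntegral.integral_add hii1 (nice_ee2.intervalIntegrable 0 x)
  have hpow : ∫ t in (0:ℝ)..x, t^2/18 = x^3/54 := by
    rw [intervalIntegral.integral_div, integral_pow]
    norm_num
    ring
  show (1/x) * ∫ t in (0:ℝ)..x, cesaroPR (cesaroPR natPartialSum) t = _
  rw [hcong, hsum, hpow]
  show _ = x^2/54 + (1/x) * ∫ t in (0:ℝ)..x, ee2 t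
  field_simp

theorem generalized_cesaro_sum_naturals :
    Tendsto (fun x : ℝ =>
        (3 / 2) * (cesaroPR (cesaroPR (cesaroPR natPartialSum)) x
          - (1 / 3) * cesaroPR (cesaroPR natPartialSum) x))
      atTop (nhds (-(1 / 12))) := by
  have h3 : Tendsto (cesaroPR ee2) atTop (nhds (-(1/12))) :=
    cesaro_tendsto nice_ee2 ee2_bound ee2_tendsto
  have hcomb : Tendsto (fun x => (3/2) * (cesaroPR ee2 x - (1/3) * ee2 x))
      atTop (nhds (-(1/12))) := by
    have h := ((h3.sub (ee2_tendsto.const_mul (1/3))).const_mul (3/2))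
    have : (3:ℝ)/2 * (-(1/12) - 1/3 * -(1/12)) = -(1/12) := by norm_num
    rwa [this] at h
  refine Filter.Tendsto.congr' ?_ hcomb
  filter_upwards [eventually_gt_atTop (0:ℝ)] with x hx
  rw [u3_eq hx]
  have hu2 : cesaroPR (cesaroPR natPartialSum) x = x^2/18 + ee2 x := by
    unfold ee2; ring
  rw [hu2]
  ring
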